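/- If G is a primitive subgroup of the symmetric group S_d (acting on a set of d elements) that contains a transposition, then G = S_d. -/

import Mathlib

open MulAction
open scoped Pointwise

/-- If `G` is a primitive subgroup of the symmetric group `S_d` (acting on `Fin d`,
i.e. the action of `G` on `Fin d` is transitive and every block is trivial)
and `G` contains a transposition, then `G` is all of `S_d`. -/
theorem primitive_subgroup_with_transposition_eq_top
    (d : ℕ) (G : Subgroup (Equiv.Perm (Fin d)))
    (htrans : MulAction.IsPretransitive G (Fin d))
    (hblocks : ∀ B : Set (Fin d), MulAction.IsBlock G B → MulAction.IsTrivialBlock B)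
    (σ : Equiv.Perm (Fin d)) (hswap : σ.IsSwap) (hσ : σ ∈ G) :
    G = ⊤ := by
  obtain ⟨x, y, hxy, rfl⟩ := hswap
  -- the relation: a ~ b iff a = b or swap a b ∈ G
  set S : Fin d → Fin d → Prop := fun a b => a = b ∨ Equiv.swap a b ∈ G with hS
  have hsymm : ∀ {a b}, S a b → S b a := by
    rintro a b (rfl | h)
    · exact Or.inl rfl
    · exact Or.inr (by rwa [Equiv.swap_comm])
  have htriple : ∀ {a b c}, S a b → S b c → S a c := by
    rintro a b c (rfl | hab) (rfl | hbc)
    · exact Or.inl rfl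
    · exact Or.inr hbc
    · exact Or.inr hab
    · rcases eq_or_ne a c with rfl | hac
      · exact Or.inl rfl
      · refine Or.inr ?_
        rcases eq_or_ne a b with rfl | hab'
        · exact hbc
        rcases eq_or_ne b c with rfl | hbc'
        · exact hab
        have h3 : Equiv.swap b a * Equiv.swap c b * Equiv.swap b a = Equiv.swap a c :=
          Equiv.swap_mul_swap_mul_swap hbc'.symm (Ne.symm hac)
        rw [← h3]
        rw [Equiv.swap_comm b a, Equiv.swap_comm c b]
        exact mul_mem (mul_mem hab hbc) hab
  -- invariance under G
  have hinv : ∀ (g : G) (a b : Fin d), S a b → S (g • a) (g • b) := by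
    rintro ⟨g, hg⟩ a b (rfl | h)
    · exact Or.inl rfl
    · refine Or.inr ?_
      have : Equiv.swap (g a) (g b) = g * Equiv.swap a b * g⁻¹ := by
        rw [Equiv.swap_apply_apply]
      show Equiv.swap (g a) (g b) ∈ G
      rw [this]
      exact mul_mem (mul_mem hg h) (inv_mem hg)
  -- the class of x is a block
  set B : Set (Fin d) := {b | S x b} with hB
  have hblock : MulAction.IsBlock G B := by
    rw [MulAction.isBlock_iff_smul_eq_or_disjoint]
    intro g
    rcases Set.disjoint_or_nonempty_inter (g • B) B with hd | ⟨c, hc1, hc2⟩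
    · exact Or.inr hd
    left
    obtain ⟨b, hb, rfl⟩ := hc1
    -- S x b and S x (g • b), hence S x (g • x)
    have hxg : S x (g • x) := by
      have h1 : S (g • x) (g • b) := hinv g x b hb
      have hc2' : S x (g • b) := hc2
      exact htriple hc2' (hsymm h1)
    ext c
    constructor
    · rintro ⟨a, ha, rfl⟩
      exact htriple hxg (hinv g x a ha)
    · intro hc
      refine ⟨g⁻¹ • c, ?_, by simp⟩
      have := hinv g⁻¹ (g • x) c (htriple (hsymm hxg) hc)
      simp at this
      exact this
  have hBtriv := hblocks B hblock
  have hxB : x ∈ B := Or.inl rfl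
  have hyB : y ∈ B := Or.inr hσ
  have hBuniv : B = Set.univ := by
    rcases hBtriv with h | h
    · exact absurd (h hxB hyB) hxy
    · exact h
  -- every transposition is in G
  have hall : ∀ a b : Fin d, a ≠ b → Equiv.swap a b ∈ G := by
    intro a b hab
    have ha : S x a := show a ∈ B from hBuniv ▸ Set.mem_univ a
    have hb : S x b := show b ∈ B from hBuniv ▸ Set.mem_univ b
    rcases htriple (hsymm ha) hb with h | h
    · exact absurd h hab
    · exact h
  rw [eq_top_iff]
  intro π _
  exact Equiv.Perm.swap_induction_on π (one_mem G)
    (fun f a b hab ih => mul_mem (hall a b hab) ih)
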